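/- arXiv:quant-ph/9904108 — 3 statements merged into one kernel-verified Lean document; each statement's English description precedes it below -/
import Mathlib

section
/- Let G be a completely positive trace-preserving map on 2×2 matrices that is not constant on density matrices. If ρ is a one-qubit density matrix such that G(ρ) is a pure state, then ρ is itself a pure state. -/
open Matrix
open scoped ComplexOrder

/-- A density matrix on index type `n`: positive semidefinite with trace 1. -/
def IsDensity {n : Type*} [Fintype n] (ρ : Matrix n n ℂ) : Prop :=
  ρ.PosSemidef ∧ ρ.trace = 1

/-- The extension `G ⊗ I_M` of a superoperator `G` on 2×2 matrices, acting blockwise. -/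
def extendMap (G : Matrix (Fin 2) (Fin 2) ℂ →ₗ[ℂ] Matrix (Fin 2) (Fin 2) ℂ) (M : ℕ)
    (A : Matrix (Fin 2 × Fin M) (Fin 2 × Fin M) ℂ) : Matrix (Fin 2 × Fin M) (Fin 2 × Fin M) ℂ :=
  Matrix.of fun p q => G (Matrix.of fun a b => A (a, p.2) (b, q.2)) p.1 q.1

/-- `G` is completely positive: `G ⊗ I_M` preserves positive semidefiniteness for every `M`. -/
def IsCompletelyPositive (G : Matrix (Fin 2) (Fin 2) ℂ →ₗ[ℂ] Matrix (Fin 2) (Fin 2) ℂ) : Prop :=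
  ∀ (M : ℕ) (A : Matrix (Fin 2 × Fin M) (Fin 2 × Fin M) ℂ), A.PosSemidef → (extendMap G M A).PosSemidef

-- trace = sum of eigenvalues, 2x2
lemma trace_eq_eigs {A : Matrix (Fin 2) (Fin 2) ℂ} (hA : A.IsHermitian) :
    A.trace = ((hA.eigenvalues 0 : ℂ) + (hA.eigenvalues 1 : ℂ)) := by
  have hst := congrArg Matrix.trace hA.spectral_theorem
  rw [hA.trace_eq_sum_eigenvalues, Fin.sum_univ_two]
  rfl

lemma psd_of_trace_det {A : Matrix (Fin 2) (Fin 2) ℂ} (hA : A.IsHermitian)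
    (htr : A.trace = 1) (hdet : 0 ≤ (A.det).re) : A.PosSemidef := by
  have hsum : hA.eigenvalues 0 + hA.eigenvalues 1 = 1 := by
    have := trace_eq_eigs hA
    rw [htr] at this
    exact_mod_cast this.symm
  have hprod : hA.eigenvalues 0 * hA.eigenvalues 1 = A.det.re := by
    rw [hA.det_eq_prod_eigenvalues, Fin.prod_univ_two]
    norm_cast
  apply hA.posSemidef_iff_eigenvalues_nonneg.mpr
  intro i
  fin_cases i
  · show (0:ℝ) ≤ hA.eigenvalues 0
    nlinarith [hdet, hsum, hprod]
  · show (0:ℝ) ≤ hA.eigenvalues 1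
    nlinarith [hdet, hsum, hprod]

lemma sq_eq_self_of_det_zero {ρ : Matrix (Fin 2) (Fin 2) ℂ} (htr : ρ.trace = 1)
    (hdet : ρ.det = 0) : ρ * ρ = ρ := by
  have ht : ρ 0 0 + ρ 1 1 = 1 := by simpa [Matrix.trace, Fin.sum_univ_two] using htr
  have hd : ρ 0 0 * ρ 1 1 - ρ 0 1 * ρ 1 0 = 0 := by
    simpa [Matrix.det_fin_two] using hdet
  ext i j
  fin_cases i <;> fin_cases j <;> simp [Matrix.mul_apply, Fin.sum_univ_two]
  · linear_combination ρ 0 0 * ht - hd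
  · linear_combination ρ 0 1 * ht
  · linear_combination ρ 1 0 * ht
  · linear_combination ρ 1 1 * ht - hd

lemma sandwich {P : Matrix (Fin 2) (Fin 2) ℂ} (X : Matrix (Fin 2) (Fin 2) ℂ)
    (hdet : P.det = 0) : P * X * P = (X * P).trace • P := by
  have hd : P 0 0 * P 1 1 - P 0 1 * P 1 0 = 0 := by
    simpa [Matrix.det_fin_two] using hdet
  ext i j
  fin_cases i <;> fin_cases j <;>
    simp [Matrix.mul_apply, Matrix.trace, Matrix.diag, Fin.sum_univ_two, Matrix.smul_apply,
      smul_eq_mul]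
  · linear_combination (-(X 1 1)) * hd
  · linear_combination (X 0 1) * hd
  · linear_combination (X 1 0) * hd
  · linear_combination (-(X 0 0)) * hd

lemma extreme_pure {P A B : Matrix (Fin 2) (Fin 2) ℂ} (hP : IsDensity P) (hP2 : P * P = P)
    (hA : IsDensity A) (hB : IsDensity B) {c d : ℝ} (hc : 0 < c) (hd : 0 < d)
    (hsum : P = (c : ℂ) • A + (d : ℂ) • B) : A = P := by
  have hPH : Pᴴ = P := hP.1.1
  have ht : P 0 0 + P 1 1 = 1 := by simpa [Matrix.trace, Fin.sum_univ_two] using hP.2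
  have e00 : (P * P) 0 0 = P 0 0 := by rw [hP2]
  rw [Matrix.mul_apply, Fin.sum_univ_two] at e00
  have hdet : P.det = 0 := by
    rw [Matrix.det_fin_two]
    linear_combination P 0 0 * ht - e00
  set Q : Matrix (Fin 2) (Fin 2) ℂ := 1 - P with hQdef
  have hQH : Qᴴ = Q := by
    rw [hQdef, Matrix.conjTranspose_sub, Matrix.conjTranspose_one, hPH]
  have hQP : Q * P = 0 := by rw [hQdef, sub_mul, one_mul, hP2, sub_self]
  have hQPQ : Q * P * Q = 0 := by rw [hQP, zero_mul]
  have hSpsd : (Q * A * Q).PosSemidef := by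
    have := hA.1.mul_mul_conjTranspose_same Q
    rwa [hQH] at this
  have hTpsd : (Q * B * Q).PosSemidef := by
    have := hB.1.mul_mul_conjTranspose_same Q
    rwa [hQH] at this
  have hzero : (c : ℂ) • (Q * A * Q) + (d : ℂ) • (Q * B * Q) = 0 := by
    have : Q * ((c : ℂ) • A + (d : ℂ) • B) * Q = 0 := by rw [← hsum]; exact hQPQ
    rw [mul_add, add_mul, Matrix.mul_smul, Matrix.smul_mul, Matrix.mul_smul,
      Matrix.smul_mul] at this
    exact this
  have hS0 : Q * A * Q = 0 := by
    have hq : ∀ x : Fin 2 → ℂ, star x ⬝ᵥ (Q * A * Q) *ᵥ x = 0 := by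
      intro x
      have h₁ : 0 ≤ star x ⬝ᵥ (Q * A * Q) *ᵥ x := hSpsd.dotProduct_mulVec_nonneg x
      have h₂ : 0 ≤ star x ⬝ᵥ (Q * B * Q) *ᵥ x := hTpsd.dotProduct_mulVec_nonneg x
      have h₃ : (c : ℂ) * (star x ⬝ᵥ (Q * A * Q) *ᵥ x)
          + (d : ℂ) * (star x ⬝ᵥ (Q * B * Q) *ᵥ x) = 0 := by
        have h4 : (c : ℂ) • (star x ⬝ᵥ (Q * A * Q) *ᵥ x)
            + (d : ℂ) • (star x ⬝ᵥ (Q * B * Q) *ᵥ x) = 0 := by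
          rw [← dotProduct_smul, ← dotProduct_smul, ← Matrix.smul_mulVec,
            ← Matrix.smul_mulVec, ← dotProduct_add, ← Matrix.add_mulVec, hzero,
            Matrix.zero_mulVec, dotProduct_zero]
        rw [smul_eq_mul, smul_eq_mul] at h4
        exact h4
      have hcpos : (0 : ℂ) < (c : ℂ) := Complex.zero_lt_real.mpr hc
      have hdpos : (0 : ℂ) < (d : ℂ) := Complex.zero_lt_real.mpr hd
      have e1 := (add_eq_zero_iff_of_nonneg (mul_nonneg hcpos.le h₁)
        (mul_nonneg hdpos.le h₂)).mp h₃
      exact (mul_eq_zero.mp e1.1).resolve_left hcpos.ne'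
    have hmv : ∀ x, (Q * A * Q) *ᵥ x = 0 :=
      fun x => (hSpsd.dotProduct_mulVec_zero_iff x).mp (hq x)
    ext i j
    have := congrFun (hmv (Pi.single j 1)) i
    simpa [Matrix.mulVec_single] using this
  obtain ⟨C, hC⟩ : ∃ C : Matrix (Fin 2) (Fin 2) ℂ, A = Cᴴ * C := by
    open scoped MatrixOrder in
    exact CStarAlgebra.nonneg_iff_eq_star_mul_self.mp hA.1.nonneg
  have hCQ : C * Q = 0 := by
    apply Matrix.conjTranspose_mul_self_eq_zero.mp
    have : (C * Q)ᴴ * (C * Q) = Q * A * Q := by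
      rw [Matrix.conjTranspose_mul, hQH, hC]
      noncomm_ring
    rw [this, hS0]
  have hAQ : A * Q = 0 := by rw [hC, mul_assoc, hCQ, mul_zero]
  have hQA : Q * A = 0 := by
    have := congrArg Matrix.conjTranspose hAQ
    rwa [Matrix.conjTranspose_mul, hQH, hA.1.1, Matrix.conjTranspose_zero] at this
  have h1 : A = A * P := by
    have := hAQ
    rw [hQdef, mul_sub, mul_one, sub_eq_zero] at this
    exact this
  have h2 : A = P * A := by
    have := hQA
    rw [hQdef, sub_mul, one_mul, sub_eq_zero] at this
    exact this
  have h3 : A = P * A * P := by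
    calc A = P * A := h2
    _ = P * (A * P) := by rw [← h1]
    _ = P * A * P := by rw [mul_assoc]
  rw [sandwich A hdet] at h3
  have htrace := congrArg Matrix.trace h3
  rw [Matrix.trace_smul, hA.2, hP.2, smul_eq_mul, mul_one] at htrace
  rw [h3, ← htrace, one_smul]

lemma density_map {G : Matrix (Fin 2) (Fin 2) ℂ →ₗ[ℂ] Matrix (Fin 2) (Fin 2) ℂ}
    (hCP : IsCompletelyPositive G) (hTP : ∀ ρ, IsDensity ρ → (G ρ).trace = 1)
    {τ : Matrix (Fin 2) (Fin 2) ℂ} (hτ : IsDensity τ) : IsDensity (G τ) := by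
  refine ⟨?_, hTP τ hτ⟩
  have h1 := hCP 1 (τ.submatrix Prod.fst Prod.fst) (hτ.1.submatrix Prod.fst)
  have h2 := h1.submatrix (fun a : Fin 2 => (a, (0 : Fin 1)))
  have h3 : (extendMap G 1 (τ.submatrix Prod.fst Prod.fst)).submatrix
      (fun a : Fin 2 => (a, (0 : Fin 1))) (fun a : Fin 2 => (a, (0 : Fin 1))) = G τ := by
    ext i j
    rfl
  rwa [h3] at h2

theorem cptp_pure_preimage
    (G : Matrix (Fin 2) (Fin 2) ℂ →ₗ[ℂ] Matrix (Fin 2) (Fin 2) ℂ)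
    (hCP : IsCompletelyPositive G)
    (hTP : ∀ ρ, IsDensity ρ → (G ρ).trace = 1)
    (hNC : ¬ ∃ σ, ∀ ρ, IsDensity ρ → G ρ = σ)
    (ρ : Matrix (Fin 2) (Fin 2) ℂ) (hρ : IsDensity ρ)
    (hpure : G ρ * G ρ = G ρ) :
    ρ * ρ = ρ := by
  by_contra hne
  apply hNC
  refine ⟨G ρ, fun τ hτ => ?_⟩
  have hdet0 : ρ.det ≠ 0 := fun h => hne (sq_eq_self_of_det_zero hρ.2 h)
  have hform : ρ.det = ((hρ.1.1.eigenvalues 0 * hρ.1.1.eigenvalues 1 : ℝ) : ℂ) := by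
    rw [hρ.1.1.det_eq_prod_eigenvalues, Fin.prod_univ_two]
    norm_cast
  have hdetre : 0 < ρ.det.re := by
    rcases lt_or_eq_of_le
        (mul_nonneg (hρ.1.eigenvalues_nonneg 0) (hρ.1.eigenvalues_nonneg 1)) with h | h
    · rw [hform, Complex.ofReal_re]
      exact h
    · exact absurd (by rw [hform, ← h, Complex.ofReal_zero]) hdet0
  set g : ℝ → ℝ := fun ε =>
    (((1 + (ε:ℂ)) * ρ 0 0 - (ε:ℂ) * τ 0 0) * ((1 + (ε:ℂ)) * ρ 1 1 - (ε:ℂ) * τ 1 1)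
      - ((1 + (ε:ℂ)) * ρ 0 1 - (ε:ℂ) * τ 0 1) * ((1 + (ε:ℂ)) * ρ 1 0 - (ε:ℂ) * τ 1 0)).re
    with hgdef
  have hgcont : Continuous g := by
    apply Complex.continuous_re.comp
    fun_prop
  have hg0 : g 0 = ρ.det.re := by
    simp [hgdef, Matrix.det_fin_two]
  have hpos0 : 0 < g 0 := by rw [hg0]; exact hdetre
  have hev : g ⁻¹' Set.Ioi 0 ∈ nhds (0:ℝ) := hgcont.continuousAt (Ioi_mem_nhds hpos0)
  have hev2 : ∀ᶠ ε in nhdsWithin (0:ℝ) (Set.Ioi 0), 0 < g ε ∧ 0 < ε := by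
    filter_upwards [nhdsWithin_le_nhds hev, self_mem_nhdsWithin] with ε h1 h2
    exact ⟨h1, h2⟩
  obtain ⟨ε, hgε, hεpos⟩ := hev2.exists
  set σ' : Matrix (Fin 2) (Fin 2) ℂ := (1 + (ε:ℂ)) • ρ - (ε:ℂ) • τ with hσdef
  have hH : σ'.IsHermitian := by
    show σ'ᴴ = σ'
    rw [hσdef, Matrix.conjTranspose_sub, Matrix.conjTranspose_smul, Matrix.conjTranspose_smul,
      hρ.1.1.eq, hτ.1.1.eq]
    congr 1 <;> simp [Complex.star_def, map_add, Complex.conj_ofReal]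
  have htr' : σ'.trace = 1 := by
    rw [hσdef, Matrix.trace_sub, Matrix.trace_smul, Matrix.trace_smul, hρ.2, hτ.2]
    simp [smul_eq_mul]
  have hdet' : 0 ≤ σ'.det.re := by
    have h : σ'.det.re = g ε := by
      rw [Matrix.det_fin_two]
      simp only [hσdef, Matrix.sub_apply, Matrix.smul_apply, smul_eq_mul, hgdef]
    rw [h]
    exact hgε.le
  have hσdens : IsDensity σ' := ⟨psd_of_trace_det hH htr' hdet', htr'⟩
  have h1ε : (1 + (ε:ℂ)) ≠ 0 := by
    have : ((1+ε:ℝ):ℂ) ≠ 0 := Complex.ofReal_ne_zero.mpr (by positivity)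
    push_cast at this
    exact this
  have ha : (0:ℝ) < ε / (1 + ε) := div_pos hεpos (by linarith)
  have hb : (0:ℝ) < 1 / (1 + ε) := by positivity
  have hdecomp : ρ = ((ε / (1 + ε) : ℝ) : ℂ) • τ + ((1 / (1 + ε) : ℝ) : ℂ) • σ' := by
    ext i j
    simp only [Matrix.add_apply, Matrix.smul_apply, Matrix.sub_apply, smul_eq_mul, hσdef]
    push_cast
    field_simp
    ring
  have hGdecomp : G ρ = ((ε / (1 + ε) : ℝ) : ℂ) • G τ + ((1 / (1 + ε) : ℝ) : ℂ) • G σ' := by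
    conv_lhs => rw [hdecomp]
    rw [map_add, G.map_smul, G.map_smul]
  exact extreme_pure ⟨(density_map hCP hTP hρ).1, hTP ρ hρ⟩ hpure (density_map hCP hTP hτ)
    (density_map hCP hTP hσdens) ha hb hGdecomp
end

section
/- Let G be a completely positive trace-preserving map on 2×2 matrices, and suppose there exists a completely positive trace-preserving map H on 2×2 matrices such that H ∘ G is the identity map. Then G is a unitary superoperator, i.e., there exists U ∈ U(2) with G(ρ) = U ρ U† for all ρ. -/
open Matrix
open scoped ComplexOrder

section Helpers

set_option linter.unusedSectionVars false

variable {n : Type*} [Fintype n] [DecidableEq n]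

lemma outer_isHermitian (v : n → ℂ) : (vecMulVec v (star v)).IsHermitian := by
  ext i j
  simp [vecMulVec_apply, conjTranspose_apply, mul_comm]

lemma outer_mulVec (v x : n → ℂ) : vecMulVec v (star v) *ᵥ x = (star v ⬝ᵥ x) • v := by
  ext i
  simp only [mulVec, dotProduct, vecMulVec_apply, Pi.smul_apply, smul_eq_mul, Pi.star_apply,
    Finset.sum_mul]
  exact Finset.sum_congr rfl fun j _ => by ring

lemma star_dot_swap (v x : n → ℂ) : star x ⬝ᵥ v = starRingEnd ℂ (star v ⬝ᵥ x) := by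
  simp [dotProduct, map_sum, mul_comm]

lemma outer_posSemidef (v : n → ℂ) : (vecMulVec v (star v)).PosSemidef := by
  refine PosSemidef.of_dotProduct_mulVec_nonneg (outer_isHermitian v) fun x => ?_
  rw [outer_mulVec, dotProduct_smul, smul_eq_mul, star_dot_swap]
  exact star_mul_self_nonneg _

lemma trace_outer (v : n → ℂ) : (vecMulVec v (star v)).trace = star v ⬝ᵥ v := by
  simp [Matrix.trace, Matrix.diag, vecMulVec_apply, dotProduct, mul_comm]

lemma psd_smul_real {A : Matrix n n ℂ} (hA : A.PosSemidef) {r : ℝ} (hr : 0 ≤ r) :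
    ((r : ℂ) • A).PosSemidef := by
  refine PosSemidef.of_dotProduct_mulVec_nonneg ?_ fun x => ?_
  · unfold Matrix.IsHermitian
    rw [conjTranspose_smul, hA.1.eq]
    simp
  · rw [smul_mulVec, dotProduct_smul, smul_eq_mul]
    have h := hA.dotProduct_mulVec_nonneg x
    rw [Complex.nonneg_iff] at h ⊢
    constructor
    · simp only [Complex.mul_re, Complex.ofReal_re, Complex.ofReal_im, zero_mul, sub_zero]
      exact mul_nonneg hr h.1
    · simp [Complex.mul_im, ← h.2]

lemma pinch (P : Matrix n n ℂ) (v : n → ℂ) (hv : v ≠ 0) (hP : P.PosSemidef)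
    (hle : (vecMulVec v (star v) - P).PosSemidef) :
    ∃ c : ℂ, P = c • vecMulVec v (star v) := by
  set s : ℂ := star v ⬝ᵥ v with hs_def
  have hs : s ≠ 0 := fun h => hv (dotProduct_star_self_eq_zero.mp h)
  have hkill : ∀ x : n → ℂ, star v ⬝ᵥ x = 0 → P *ᵥ x = 0 := by
    intro x hx
    have h1 : star x ⬝ᵥ (vecMulVec v (star v)) *ᵥ x = 0 := by
      rw [outer_mulVec, hx, zero_smul, dotProduct_zero]
    have h2 := hle.dotProduct_mulVec_nonneg x
    rw [sub_mulVec, dotProduct_sub, h1, zero_sub] at h2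
    exact (hP.dotProduct_mulVec_zero_iff x).mp
      (le_antisymm (neg_nonneg.mp h2) (hP.dotProduct_mulVec_nonneg x))
  set α : ℂ := (star v ⬝ᵥ (P *ᵥ v)) / s with hα
  have hPv : P *ᵥ v = α • v := by
    set z : n → ℂ := P *ᵥ v - α • v with hz_def
    have hz : star v ⬝ᵥ z = 0 := by
      rw [hz_def, dotProduct_sub, dotProduct_smul, smul_eq_mul, hα, ← hs_def,
        div_mul_cancel₀ _ hs, sub_self]
    have hPz : P *ᵥ z = 0 := hkill z hz
    have hzv : star z ⬝ᵥ v = 0 := by rw [star_dot_swap v z, hz, map_zero]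
    have hvPmul : star z ᵥ* P = 0 := by
      have h5 : star (P *ᵥ z) = star z ᵥ* Pᴴ := star_mulVec P z
      rw [hPz, star_zero, hP.1.eq] at h5
      exact h5.symm
    have hzPv : star z ⬝ᵥ (P *ᵥ v) = 0 := by
      rw [dotProduct_mulVec, hvPmul, zero_dotProduct]
    have hzz : star z ⬝ᵥ z = 0 := by
      have : star z ⬝ᵥ z = star z ⬝ᵥ (P *ᵥ v) - α * (star z ⬝ᵥ v) := by
        rw [hz_def, dotProduct_sub, dotProduct_smul, smul_eq_mul]
      rw [this, hzPv, hzv, mul_zero, sub_zero]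
    have hz0 : z = 0 := dotProduct_star_self_eq_zero.mp hzz
    exact sub_eq_zero.mp (hz_def ▸ hz0)
  refine ⟨α / s, ?_⟩
  have hx : ∀ j : n, P *ᵥ Pi.single j 1 = ((starRingEnd ℂ (v j)) / s) • (P *ᵥ v) := by
    intro j
    have hperp : star v ⬝ᵥ (Pi.single j 1 - ((starRingEnd ℂ (v j)) / s) • v) = 0 := by
      rw [dotProduct_sub, dotProduct_smul, smul_eq_mul, dotProduct_single, ← hs_def,
        div_mul_cancel₀ _ hs]
      simp [Pi.star_apply]
    have hdecomp : Pi.single j 1 =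
        ((starRingEnd ℂ (v j)) / s) • v + (Pi.single j 1 - ((starRingEnd ℂ (v j)) / s) • v) := by
      abel
    calc P *ᵥ Pi.single j 1
        = P *ᵥ (((starRingEnd ℂ (v j)) / s) • v)
          + P *ᵥ (Pi.single j 1 - ((starRingEnd ℂ (v j)) / s) • v) := by
          rw [← mulVec_add, ← hdecomp]
      _ = ((starRingEnd ℂ (v j)) / s) • (P *ᵥ v) := by
          rw [hkill _ hperp, add_zero, mulVec_smul]
  ext i j
  have h6 : P i j = (P *ᵥ Pi.single j 1) i := by simp [mulVec_single]
  rw [h6, hx j, hPv]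
  simp only [Pi.smul_apply, smul_eq_mul, Matrix.smul_apply, vecMulVec_apply, Pi.star_apply,
    Complex.star_def]
  ring

lemma mul_diag_conjT (V : Matrix n n ℂ) (d : n → ℂ) :
    V * diagonal d * Vᴴ = ∑ i, d i • vecMulVec (fun k => V k i) (star fun k => V k i) := by
  ext p q
  rw [Matrix.sum_apply]
  simp only [mul_apply, mul_diagonal, diagonal_apply, conjTranspose_apply, Matrix.smul_apply,
    vecMulVec_apply, Pi.star_apply, smul_eq_mul, mul_ite, mul_zero, Finset.sum_ite_eq']
  refine Finset.sum_congr rfl fun i hi => ?_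
  rw [if_pos hi]
  ring

lemma spectral_sum {C : Matrix n n ℂ} (hC : C.IsHermitian) :
    C = ∑ i, (hC.eigenvalues i : ℂ) •
      vecMulVec (fun k => (hC.eigenvectorUnitary : Matrix n n ℂ) k i)
        (star fun k => (hC.eigenvectorUnitary : Matrix n n ℂ) k i) := by
  conv_lhs => rw [hC.spectral_theorem]
  rw [← mul_diag_conjT]
  rfl

lemma columns_orthonormal {C : Matrix n n ℂ} (hC : C.IsHermitian) (i j : n) :
    (star fun k => (hC.eigenvectorUnitary : Matrix n n ℂ) k i) ⬝ᵥ
      (fun k => (hC.eigenvectorUnitary : Matrix n n ℂ) k j) = if i = j then 1 else 0 := by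
  have h1 : (star (hC.eigenvectorUnitary : Matrix n n ℂ) *
      (hC.eigenvectorUnitary : Matrix n n ℂ)) i j = (1 : Matrix n n ℂ) i j := by
    rw [Unitary.coe_star_mul_self]
  simpa [mul_apply, dotProduct, Matrix.star_apply, Matrix.one_apply] using h1

end Helpers

section ExtendLemmas

variable (G H : Matrix (Fin 2) (Fin 2) ℂ →ₗ[ℂ] Matrix (Fin 2) (Fin 2) ℂ) (M : ℕ)

lemma extendMap_add (A B : Matrix (Fin 2 × Fin M) (Fin 2 × Fin M) ℂ) :
    extendMap G M (A + B) = extendMap G M A + extendMap G M B := by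
  ext p q
  have h : (Matrix.of fun a b => (A + B) (a, p.2) (b, q.2)) =
      (Matrix.of fun a b => A (a, p.2) (b, q.2)) + (Matrix.of fun a b => B (a, p.2) (b, q.2)) := rfl
  show G _ p.1 q.1 = G _ p.1 q.1 + G _ p.1 q.1
  rw [h, map_add]
  rfl

lemma extendMap_smul (c : ℂ) (A : Matrix (Fin 2 × Fin M) (Fin 2 × Fin M) ℂ) :
    extendMap G M (c • A) = c • extendMap G M A := by
  ext p q
  have h : (Matrix.of fun a b => (c • A) (a, p.2) (b, q.2)) =
      c • (Matrix.of fun a b => A (a, p.2) (b, q.2)) := rfl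
  show G _ p.1 q.1 = c • G _ p.1 q.1
  rw [h, _root_.map_smul]
  rfl

/-- `extendMap G M` as a linear map. -/
def extendLM : Matrix (Fin 2 × Fin M) (Fin 2 × Fin M) ℂ →ₗ[ℂ]
    Matrix (Fin 2 × Fin M) (Fin 2 × Fin M) ℂ where
  toFun := extendMap G M
  map_add' := extendMap_add G M
  map_smul' := extendMap_smul G M

lemma extendMap_comp (hinv : ∀ A : Matrix (Fin 2) (Fin 2) ℂ, H (G A) = A)
    (A : Matrix (Fin 2 × Fin M) (Fin 2 × Fin M) ℂ) :
    extendMap H M (extendMap G M A) = A := by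
  ext p q
  show H (Matrix.of fun a b => extendMap G M A (a, p.2) (b, q.2)) p.1 q.1 = A p q
  have h : (Matrix.of fun a b => extendMap G M A (a, p.2) (b, q.2)) =
      G (Matrix.of fun c d => A (c, p.2) (d, q.2)) := rfl
  rw [h, hinv]
  show A (p.1, p.2) (q.1, q.2) = A p q
  simp

lemma extendMap_trace (hTP : ∀ A : Matrix (Fin 2) (Fin 2) ℂ, (G A).trace = A.trace)
    (A : Matrix (Fin 2 × Fin M) (Fin 2 × Fin M) ℂ) :
    (extendMap G M A).trace = A.trace := by
  have key : ∀ m : Fin M, ∑ a : Fin 2, G (Matrix.of fun c d => A (c, m) (d, m)) a a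
      = ∑ a : Fin 2, A (a, m) (a, m) := by
    intro m
    simpa [Matrix.trace, Matrix.diag] using hTP (Matrix.of fun c d => A (c, m) (d, m))
  simp only [Matrix.trace, Matrix.diag, extendMap, Matrix.of_apply, Fintype.sum_prod_type]
  rw [Finset.sum_comm]
  conv_rhs => rw [Finset.sum_comm]
  exact Finset.sum_congr rfl fun m _ => key m

end ExtendLemmas

/-- The unnormalized maximally entangled vector. -/
def wvec : Fin 2 × Fin 2 → ℂ := fun p => if p.1 = p.2 then 1 else 0

lemma wvec_ne_zero : wvec ≠ 0 := fun h => by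
  have := congrFun h ((0 : Fin 2), (0 : Fin 2))
  simp [wvec] at this

lemma wvec_trace : (vecMulVec wvec (star wvec)).trace = 2 := by
  simp [Matrix.trace, Matrix.diag, vecMulVec_apply, wvec, Fintype.sum_prod_type,
    Fin.sum_univ_two]

lemma wvec_block (m n' : Fin 2) :
    (Matrix.of fun c d => vecMulVec wvec (star wvec) (c, m) (d, n')) =
      Matrix.single m n' (1 : ℂ) := by
  ext c d
  simp only [Matrix.of_apply, vecMulVec_apply, Pi.star_apply, wvec, Matrix.single]
  by_cases h1 : c = m <;> by_cases h2 : d = n' <;>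
    first
    | (subst h1; subst h2; simp)
    | simp_all [eq_comm]

lemma conj_std (F : Matrix (Fin 2) (Fin 2) ℂ) (m n' a b : Fin 2) :
    (F * Matrix.single m n' (1 : ℂ) * Fᴴ) a b = F a m * star (F b n') := by
  rw [mul_apply]
  have h : ∀ d : Fin 2, (F * Matrix.single m n' (1 : ℂ)) a d * Fᴴ d b =
      if d = n' then F a m * star (F b n') else 0 := by
    intro d
    by_cases hd : d = n'
    · subst hd
      rw [Matrix.mul_single_apply_same, conjTranspose_apply, if_pos rfl]
      ring
    · rw [Matrix.mul_single_apply_of_ne (hbj := hd), if_neg hd, zero_mul]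
  rw [Finset.sum_congr rfl fun d _ => h d]
  simp

lemma trace_mul_std (M : Matrix (Fin 2) (Fin 2) ℂ) (m n' : Fin 2) :
    (M * Matrix.single m n' (1 : ℂ)).trace = M n' m := by
  have h : ∀ k : Fin 2, (M * Matrix.single m n' (1 : ℂ)) k k = if k = n' then M k m else 0 := by
    intro k
    by_cases hk : k = n'
    · subst hk
      rw [Matrix.mul_single_apply_same, if_pos rfl, mul_one]
    · rw [Matrix.mul_single_apply_of_ne (hbj := hk), if_neg hk]
  rw [Matrix.trace]
  simp only [Matrix.diag]
  rw [Finset.sum_congr rfl fun k _ => h k]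
  simp

theorem cptp_left_inverse_unitary
    (G H : Matrix (Fin 2) (Fin 2) ℂ →ₗ[ℂ] Matrix (Fin 2) (Fin 2) ℂ)
    (hCPG : IsCompletelyPositive G) (hCPH : IsCompletelyPositive H)
    (hTPG : ∀ A : Matrix (Fin 2) (Fin 2) ℂ, (G A).trace = A.trace)
    (hTPH : ∀ A : Matrix (Fin 2) (Fin 2) ℂ, (H A).trace = A.trace)
    (hinv : ∀ A : Matrix (Fin 2) (Fin 2) ℂ, H (G A) = A) :
    ∃ U : Matrix (Fin 2) (Fin 2) ℂ, U ∈ Matrix.unitaryGroup (Fin 2) ℂ ∧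
      ∀ ρ : Matrix (Fin 2) (Fin 2) ℂ, G ρ = U * ρ * Uᴴ := by
  classical
  have hcomp : ∀ X, extendMap H 2 (extendMap G 2 X) = X := extendMap_comp G H 2 hinv
  -- injectivity of extendMap H 2
  have hΦinj : Function.Injective (extendLM G 2) := by
    intro a b hab
    have := congrArg (extendMap H 2) hab
    rwa [show (extendLM G 2) a = extendMap G 2 a from rfl,
      show (extendLM G 2) b = extendMap G 2 b from rfl, hcomp, hcomp] at this
  have hΦsurj : Function.Surjective (extendLM G 2) :=
    LinearMap.injective_iff_surjective.mp hΦinj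
  have hΨinj : Function.Injective (extendMap H 2) := by
    intro x y hxy
    obtain ⟨a, rfl⟩ := hΦsurj x
    obtain ⟨b, rfl⟩ := hΦsurj y
    rw [show (extendLM G 2) a = extendMap G 2 a from rfl,
      show (extendLM G 2) b = extendMap G 2 b from rfl, hcomp, hcomp] at hxy
    rw [hxy]
  -- the Choi matrix
  set Ω : Matrix (Fin 2 × Fin 2) (Fin 2 × Fin 2) ℂ := vecMulVec wvec (star wvec) with hΩ_def
  have hΩpsd : Ω.PosSemidef := outer_posSemidef wvec
  set C : Matrix (Fin 2 × Fin 2) (Fin 2 × Fin 2) ℂ := extendMap G 2 Ω with hC_def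
  have hC : C.PosSemidef := hCPG 2 Ω hΩpsd
  have hΨC : extendMap H 2 C = Ω := hcomp Ω
  have htrC : C.trace = 2 := by rw [hC_def, extendMap_trace G 2 hTPG, hΩ_def, wvec_trace]
  -- spectral decomposition
  have hH := hC.1
  set lam := hH.eigenvalues with hlam_def
  set u : Fin 2 × Fin 2 → (Fin 2 × Fin 2) → ℂ :=
    fun i k => (hH.eigenvectorUnitary : Matrix (Fin 2 × Fin 2) (Fin 2 × Fin 2) ℂ) k i with hu_def
  have hspec : C = ∑ i, (lam i : ℂ) • vecMulVec (u i) (star (u i)) := spectral_sum hH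
  have horth : ∀ i j, star (u i) ⬝ᵥ u j = if i = j then 1 else 0 :=
    fun i j => columns_orthonormal hH i j
  have hterm : ∀ i, ((lam i : ℂ) • vecMulVec (u i) (star (u i))).PosSemidef :=
    fun i => psd_smul_real (outer_posSemidef _) (hC.eigenvalues_nonneg i)
  have hsub : ∀ i, (C - (lam i : ℂ) • vecMulVec (u i) (star (u i))).PosSemidef := by
    intro i
    have h : C - (lam i : ℂ) • vecMulVec (u i) (star (u i)) =
        ∑ k ∈ Finset.univ.erase i, (lam k : ℂ) • vecMulVec (u k) (star (u k)) := by
      rw [hspec, ← Finset.add_sum_erase Finset.univ _ (Finset.mem_univ i), add_sub_cancel_left]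
    rw [h]
    exact Finset.sum_induction _ _ (fun a b ha hb => ha.add hb) Matrix.PosSemidef.zero
      (fun k _ => hterm k)
  -- the key computation
  have hkey : ∀ i, lam i ≠ 0 →
      extendMap H 2 (vecMulVec (u i) (star (u i))) = (2⁻¹ : ℂ) • Ω := by
    intro i hi
    have hpos := hCPH 2 _ (hterm i)
    have hrest := hCPH 2 _ (hsub i)
    have hΨs : extendMap H 2 (C - (lam i : ℂ) • vecMulVec (u i) (star (u i))) =
        Ω - extendMap H 2 ((lam i : ℂ) • vecMulVec (u i) (star (u i))) := by
      rw [sub_eq_add_neg, ← neg_smul, extendMap_add H 2, extendMap_smul H 2, hΨC,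
        extendMap_smul H 2, neg_smul, ← sub_eq_add_neg]
    obtain ⟨c, hc⟩ := pinch (extendMap H 2 ((lam i : ℂ) • vecMulVec (u i) (star (u i))))
      wvec wvec_ne_zero hpos (by rw [← hΩ_def, ← hΨs]; exact hrest)
    -- determine c via traces
    have ht1 : (extendMap H 2 ((lam i : ℂ) • vecMulVec (u i) (star (u i)))).trace
        = (lam i : ℂ) := by
      rw [extendMap_trace H 2 hTPH, Matrix.trace_smul, trace_outer, horth i i, if_pos rfl]
      simp
    have ht2 : (c • Ω).trace = c * 2 := by
      rw [Matrix.trace_smul, hΩ_def, wvec_trace, smul_eq_mul]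
    have h7 : (lam i : ℂ) = c * 2 := by rw [← ht1, hc, ht2]
    have hlam : (lam i : ℂ) ≠ 0 := by exact_mod_cast hi
    rw [extendMap_smul] at hc
    have h8 : extendMap H 2 (vecMulVec (u i) (star (u i)))
        = ((lam i : ℂ)⁻¹ * c) • Ω := by
      have h9 := congrArg (fun X => ((lam i : ℂ))⁻¹ • X) hc
      simp only [smul_smul] at h9
      rw [inv_mul_cancel₀ hlam, one_smul] at h9
      exact h9
    have hc0 : c ≠ 0 := by
      intro h0
      rw [h0, zero_mul] at h7
      exact hlam h7
    rw [h8]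
    congr 1
    rw [h7]
    field_simp
  -- uniqueness of the nonzero eigenvalue
  have huniq : ∀ i j, lam i ≠ 0 → lam j ≠ 0 → i = j := by
    intro i j hi hj
    by_contra hne
    have he : vecMulVec (u i) (star (u i)) = vecMulVec (u j) (star (u j)) :=
      hΨinj (by rw [hkey i hi, hkey j hj])
    have h1 := congrArg (fun Mx => star (u j) ⬝ᵥ (Mx *ᵥ u j)) he
    simp only [outer_mulVec, dotProduct_smul, smul_eq_mul] at h1
    rw [horth i j, horth j i, horth j j, if_neg hne, if_neg (Ne.symm hne), if_pos rfl] at h1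
    simp at h1
  -- existence of a nonzero eigenvalue
  have hex : ∃ i, lam i ≠ 0 := by
    by_contra hno
    push_neg at hno
    have hzero : C = 0 := by
      rw [hspec]
      refine Finset.sum_eq_zero fun i _ => ?_
      rw [hno i]
      simp
    rw [hzero] at htrC
    simp at htrC
  obtain ⟨i0, hi0⟩ := hex
  have hCeq : C = (lam i0 : ℂ) • vecMulVec (u i0) (star (u i0)) := by
    rw [hspec]
    refine Finset.sum_eq_single_of_mem i0 (Finset.mem_univ _) fun k _ hk => ?_
    have hk0 : lam k = 0 := by
      by_contra h
      exact hk (huniq k i0 h hi0)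
    rw [hk0]
    simp
  -- the Kraus vector
  set v : (Fin 2 × Fin 2) → ℂ := fun k => (Real.sqrt (lam i0) : ℂ) * u i0 k with hv_def
  have hsq : (Real.sqrt (lam i0) : ℂ) * (Real.sqrt (lam i0) : ℂ) = (lam i0 : ℂ) := by
    rw [← Complex.ofReal_mul, Real.mul_self_sqrt (hC.eigenvalues_nonneg i0)]
  have hCout : C = vecMulVec v (star v) := by
    rw [hCeq]
    ext p q
    simp only [Matrix.smul_apply, vecMulVec_apply, Pi.star_apply, smul_eq_mul, hv_def,
      Complex.star_def, _root_.map_mul, Complex.conj_ofReal]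
    rw [← hsq]
    ring
  -- the unitary
  set F : Matrix (Fin 2) (Fin 2) ℂ := Matrix.of fun a m' => v (a, m') with hF_def
  have hbasis : ∀ m n' : Fin 2,
      G (Matrix.single m n' (1 : ℂ)) = F * Matrix.single m n' (1 : ℂ) * Fᴴ := by
    intro m n'
    ext a b
    have h1 : C (a, m) (b, n') = G (Matrix.single m n' (1 : ℂ)) a b := by
      show G (Matrix.of fun c d => Ω (c, m) (d, n')) a b = _
      rw [hΩ_def, wvec_block]
    rw [conj_std, ← h1, hCout]
    rfl
  have hG : ∀ ρ : Matrix (Fin 2) (Fin 2) ℂ, G ρ = F * ρ * Fᴴ := by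
    intro ρ
    have hρ' : ρ = ∑ m, ∑ n', ρ m n' • Matrix.single m n' (1 : ℂ) := by
      conv_lhs => rw [matrix_eq_sum_single ρ]
      refine Finset.sum_congr rfl fun m _ => Finset.sum_congr rfl fun n' _ => ?_
      rw [smul_single, smul_eq_mul, mul_one]
    calc G ρ = G (∑ m, ∑ n', ρ m n' • Matrix.single m n' (1 : ℂ)) := congrArg G hρ'
      _ = ∑ m, ∑ n', ρ m n' • (F * Matrix.single m n' (1 : ℂ) * Fᴴ) := by
          rw [map_sum]
          refine Finset.sum_congr rfl fun m _ => ?_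
          rw [map_sum]
          refine Finset.sum_congr rfl fun n' _ => ?_
          rw [_root_.map_smul, hbasis]
      _ = F * ρ * Fᴴ := by
          conv_rhs => rw [hρ']
          simp only [Matrix.mul_sum, Matrix.sum_mul, Matrix.mul_smul, Matrix.smul_mul]
  have hunit : Fᴴ * F = 1 := by
    ext i j
    have h := hTPG (Matrix.single j i (1 : ℂ))
    rw [hG, Matrix.trace_mul_cycle, trace_mul_std] at h
    rw [h, Matrix.one_apply]
    by_cases hij : i = j
    · subst hij
      simp [Matrix.trace_single_eq_same]
    · rw [Matrix.trace_single_eq_of_ne (h := Ne.symm hij), if_neg hij]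
  refine ⟨F, ?_, hG⟩
  rw [Matrix.mem_unitaryGroup_iff]
  rw [Matrix.star_eq_conjTranspose]
  exact mul_eq_one_comm.mp hunit
end

section
/- Let ρ₁, ρ₂, ρ₃ be three distinct one-qubit pure-state density matrices whose Bloch vectors lie on a plane through the origin of ℝ³. If G is a completely positive trace-preserving map on 2×2 matrices that fixes ρ₁, ρ₂, and ρ₃, then G is the identity map (for n = 1). -/
open Matrix
open scoped ComplexOrder

/-- The Bloch matrix (1/2)[[1+z, x−iy],[x+iy, 1−z]]. -/
noncomputable def blochMat (x y z : ℝ) : Matrix (Fin 2) (Fin 2) ℂ :=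
  (1 / 2 : ℂ) • !![((1 + z : ℝ) : ℂ), (x : ℂ) - y * Complex.I;
                   (x : ℂ) + y * Complex.I, ((1 - z : ℝ) : ℂ)]


noncomputable def Smat (w : Fin 3 → ℂ) : Matrix (Fin 2) (Fin 2) ℂ :=
  !![w 2, w 0 - Complex.I * w 1; w 0 + Complex.I * w 1, -(w 2)]


lemma aff_ind (a b c : Fin 3 → ℝ)
    (ha : a 0 ^ 2 + a 1 ^ 2 + a 2 ^ 2 = 1)
    (hb : b 0 ^ 2 + b 1 ^ 2 + b 2 ^ 2 = 1)
    (hc : c 0 ^ 2 + c 1 ^ 2 + c 2 ^ 2 = 1)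
    (hab : ¬ (a 0 = b 0 ∧ a 1 = b 1 ∧ a 2 = b 2))
    (hac : ¬ (a 0 = c 0 ∧ a 1 = c 1 ∧ a 2 = c 2))
    (hbc : ¬ (b 0 = c 0 ∧ b 1 = c 1 ∧ b 2 = c 2))
    (α β γ : ℝ) (hsum : α + β + γ = 0)
    (hcomb : ∀ k, α * a k + β * b k + γ * c k = 0) :
    α = 0 ∧ β = 0 ∧ γ = 0 := by
  have hD : 0 < (b 0 - c 0)^2 + (b 1 - c 1)^2 + (b 2 - c 2)^2 := by
    rcases not_and_or.mp hbc with h | h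
    · have h' : b 0 - c 0 ≠ 0 := sub_ne_zero.mpr h
      have : 0 < (b 0 - c 0)^2 := by positivity
      nlinarith [sq_nonneg (b 1 - c 1), sq_nonneg (b 2 - c 2)]
    rcases not_and_or.mp h with h | h
    · have h' : b 1 - c 1 ≠ 0 := sub_ne_zero.mpr h
      have : 0 < (b 1 - c 1)^2 := by positivity
      nlinarith [sq_nonneg (b 0 - c 0), sq_nonneg (b 2 - c 2)]
    · have h' : b 2 - c 2 ≠ 0 := sub_ne_zero.mpr h
      have : 0 < (b 2 - c 2)^2 := by positivity
      nlinarith [sq_nonneg (b 0 - c 0), sq_nonneg (b 1 - c 1)]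
  have hα : α = 0 := by
    by_contra hα
    -- μ := -β/α ; a - c = μ (b - c)
    set μ : ℝ := -β / α with hμ
    have key : ∀ k, a k - c k = μ * (b k - c k) := by
      intro k
      have h := hcomb k
      have hγ : γ = -α - β := by linarith
      rw [hγ] at h
      field_simp [hμ]
      ring_nf
      ring_nf at h
      have hμα : μ * α = -β := by rw [hμ]; exact div_mul_cancel₀ _ hα
      apply mul_left_cancel₀ hα
      linear_combination h - (b k - c k) * hμα
    have h1 : 2 * (c 0 * (b 0 - c 0) + c 1 * (b 1 - c 1) + c 2 * (b 2 - c 2))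
        + ((b 0 - c 0)^2 + (b 1 - c 1)^2 + (b 2 - c 2)^2) = 0 := by linear_combination hb - hc
    have h2 : 2 * μ * (c 0 * (b 0 - c 0) + c 1 * (b 1 - c 1) + c 2 * (b 2 - c 2))
        + μ^2 * ((b 0 - c 0)^2 + (b 1 - c 1)^2 + (b 2 - c 2)^2) = 0 := by
      have e0 := key 0; have e1 := key 1; have e2 := key 2
      linear_combination (ha - hc) - (a 0 + c 0 + μ*(b 0 - c 0))*e0
        - (a 1 + c 1 + μ*(b 1 - c 1))*e1 - (a 2 + c 2 + μ*(b 2 - c 2))*e2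
    have hμμ : μ * (μ - 1) * ((b 0 - c 0)^2 + (b 1 - c 1)^2 + (b 2 - c 2)^2) = 0 := by
      linear_combination h2 - μ * h1
    have : μ = 0 ∨ μ = 1 := by
      rcases mul_eq_zero.mp hμμ with h | h
      · rcases mul_eq_zero.mp h with h | h
        · exact Or.inl h
        · exact Or.inr (by linarith)
      · exact absurd h (by linarith)
    rcases this with h | h
    · exact hac ⟨by have := key 0; rw [h] at this; linarith,
        by have := key 1; rw [h] at this; linarith,
        by have := key 2; rw [h] at this; linarith⟩
    · exact hab ⟨by have := key 0; rw [h] at this; linarith,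
        by have := key 1; rw [h] at this; linarith,
        by have := key 2; rw [h] at this; linarith⟩
  have hβ : β = 0 := by
    by_contra hβ
    have hγ : γ = -β := by linarith
    refine hbc ⟨?_, ?_, ?_⟩ <;>
    · first
      | (have h := hcomb 0; rw [hα, hγ] at h
         have : β * (b 0 - c 0) = 0 := by linarith
         have := (mul_eq_zero.mp this).resolve_left hβ; linarith)
      | (have h := hcomb 1; rw [hα, hγ] at h
         have : β * (b 1 - c 1) = 0 := by linarith
         have := (mul_eq_zero.mp this).resolve_left hβ; linarith)
      | (have h := hcomb 2; rw [hα, hγ] at h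
         have : β * (b 2 - c 2) = 0 := by linarith
         have := (mul_eq_zero.mp this).resolve_left hβ; linarith)
  exact ⟨hα, hβ, by linarith⟩

lemma plane_fix (ρ : Fin 3 → Matrix (Fin 2) (Fin 2) ℂ) (v : Fin 3 → Fin 3 → ℝ)
    (nrm : Fin 3 → ℝ)
    (hbloch : ∀ i, ρ i = blochMat (v i 0) (v i 1) (v i 2))
    (hpure : ∀ i, (v i 0) ^ 2 + (v i 1) ^ 2 + (v i 2) ^ 2 = 1)
    (hvdist : ∀ i j, i ≠ j → ¬ (v i 0 = v j 0 ∧ v i 1 = v j 1 ∧ v i 2 = v j 2))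
    (hnrm : nrm 0 ^ 2 + nrm 1 ^ 2 + nrm 2 ^ 2 ≠ 0)
    (hplane : ∀ i, nrm 0 * v i 0 + nrm 1 * v i 1 + nrm 2 * v i 2 = 0)
    (G : Matrix (Fin 2) (Fin 2) ℂ →ₗ[ℂ] Matrix (Fin 2) (Fin 2) ℂ)
    (hfix : ∀ i, G (ρ i) = ρ i) :
    ∀ (t : ℝ) (w : Fin 3 → ℝ), nrm 0 * w 0 + nrm 1 * w 1 + nrm 2 * w 2 = 0 →
      G ((t : ℂ) • 1 + Smat (fun k => (w k : ℂ))) = (t : ℂ) • 1 + Smat (fun k => (w k : ℂ)) := by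
  intro t w hw
  set Mm : Matrix (Fin 4) (Fin 4) ℝ :=
    !![1, 1, 1, 0;
       v 0 0, v 1 0, v 2 0, nrm 0;
       v 0 1, v 1 1, v 2 1, nrm 1;
       v 0 2, v 1 2, v 2 2, nrm 2] with hMm
  have hker : ∀ x : Fin 4 → ℝ, Mm *ᵥ x = 0 → x = 0 := by
    intro x hx
    have e0 := congrFun hx 0
    have e1 := congrFun hx 1
    have e2 := congrFun hx 2
    have e3 := congrFun hx 3
    simp [hMm, Matrix.mulVec, dotProduct, Fin.sum_univ_four] at e0 e1 e2 e3
    have hx3 : x 3 = 0 := by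
      have h : x 3 * (nrm 0 ^ 2 + nrm 1 ^ 2 + nrm 2 ^ 2) = 0 := by
        linear_combination nrm 0 * e1 + nrm 1 * e2 + nrm 2 * e3
          - x 0 * hplane 0 - x 1 * hplane 1 - x 2 * hplane 2
      exact (mul_eq_zero.mp h).resolve_right hnrm
    rw [hx3] at e1 e2 e3
    obtain ⟨h0, h1, h2⟩ := aff_ind (v 0) (v 1) (v 2) (hpure 0) (hpure 1) (hpure 2)
      (hvdist 0 1 (by decide)) (hvdist 0 2 (by decide)) (hvdist 1 2 (by decide))
      (x 0) (x 1) (x 2) (by linarith)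
      (by intro k; fin_cases k <;> simp <;> linarith)
    funext i; fin_cases i <;> simp [h0, h1, h2, hx3]
  have hdet : Mm.det ≠ 0 := by
    intro hd
    obtain ⟨y, hy, hy0⟩ := Matrix.exists_mulVec_eq_zero_iff.mpr hd
    exact hy (hker y hy0)
  set b : Fin 4 → ℝ := ![t, w 0, w 1, w 2] with hb
  set cc : Fin 4 → ℝ := Mm⁻¹ *ᵥ b with hcc
  have hMc : Mm *ᵥ cc = b := by
    rw [hcc, Matrix.mulVec_mulVec, Matrix.mul_nonsing_inv _ (isUnit_iff_ne_zero.mpr hdet),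
      Matrix.one_mulVec]
  have e0 := congrFun hMc 0
  have e1 := congrFun hMc 1
  have e2 := congrFun hMc 2
  have e3 := congrFun hMc 3
  simp [hMm, hb, Matrix.mulVec, dotProduct, Fin.sum_univ_four] at e0 e1 e2 e3
  have hc3 : cc 3 = 0 := by
    have h : cc 3 * (nrm 0 ^ 2 + nrm 1 ^ 2 + nrm 2 ^ 2) = 0 := by
      linear_combination nrm 0 * e1 + nrm 1 * e2 + nrm 2 * e3
        - cc 0 * hplane 0 - cc 1 * hplane 1 - cc 2 * hplane 2 + hw
    exact (mul_eq_zero.mp h).resolve_right hnrm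
  rw [hc3] at e1 e2 e3
  -- real coefficient identities
  have A0 : cc 0 + cc 1 + cc 2 = t := by linarith
  have A1 : cc 0 * v 0 0 + cc 1 * v 1 0 + cc 2 * v 2 0 = w 0 := by linarith
  have A2 : cc 0 * v 0 1 + cc 1 * v 1 1 + cc 2 * v 2 1 = w 1 := by linarith
  have A3 : cc 0 * v 0 2 + cc 1 * v 1 2 + cc 2 * v 2 2 = w 2 := by linarith
  have B0 : ((cc 0 : ℂ)) + (cc 1 : ℂ) + (cc 2 : ℂ) = (t : ℂ) := by exact_mod_cast A0
  have B1 : (cc 0 : ℂ) * (v 0 0 : ℂ) + (cc 1 : ℂ) * (v 1 0 : ℂ) + (cc 2 : ℂ) * (v 2 0 : ℂ) = (w 0 : ℂ) := by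
    exact_mod_cast A1
  have B2 : (cc 0 : ℂ) * (v 0 1 : ℂ) + (cc 1 : ℂ) * (v 1 1 : ℂ) + (cc 2 : ℂ) * (v 2 1 : ℂ) = (w 1 : ℂ) := by
    exact_mod_cast A2
  have B3 : (cc 0 : ℂ) * (v 0 2 : ℂ) + (cc 1 : ℂ) * (v 1 2 : ℂ) + (cc 2 : ℂ) * (v 2 2 : ℂ) = (w 2 : ℂ) := by
    exact_mod_cast A3
  have hdecomp : (t : ℂ) • (1 : Matrix (Fin 2) (Fin 2) ℂ) + Smat (fun k => (w k : ℂ))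
      = ((2 * cc 0 : ℝ) : ℂ) • ρ 0 + ((2 * cc 1 : ℝ) : ℂ) • ρ 1 + ((2 * cc 2 : ℝ) : ℂ) • ρ 2 := by
    rw [hbloch 0, hbloch 1, hbloch 2]
    unfold blochMat Smat
    ext i j
    fin_cases i <;> fin_cases j
    · simp [Matrix.one_apply]; push_cast; linear_combination -B0 - B3
    · simp [Matrix.one_apply]; push_cast; linear_combination -B1 + Complex.I * B2
    · simp [Matrix.one_apply]; push_cast; linear_combination -B1 - Complex.I * B2
    · simp [Matrix.one_apply]; push_cast; linear_combination -B0 + B3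
  rw [hdecomp, map_add, map_add, LinearMap.map_smul, LinearMap.map_smul, LinearMap.map_smul,
    hfix 0, hfix 1, hfix 2]

lemma plane_fixC (ρ : Fin 3 → Matrix (Fin 2) (Fin 2) ℂ) (v : Fin 3 → Fin 3 → ℝ)
    (nrm : Fin 3 → ℝ)
    (hbloch : ∀ i, ρ i = blochMat (v i 0) (v i 1) (v i 2))
    (hpure : ∀ i, (v i 0) ^ 2 + (v i 1) ^ 2 + (v i 2) ^ 2 = 1)
    (hvdist : ∀ i j, i ≠ j → ¬ (v i 0 = v j 0 ∧ v i 1 = v j 1 ∧ v i 2 = v j 2))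
    (hnrm : nrm 0 ^ 2 + nrm 1 ^ 2 + nrm 2 ^ 2 ≠ 0)
    (hplane : ∀ i, nrm 0 * v i 0 + nrm 1 * v i 1 + nrm 2 * v i 2 = 0)
    (G : Matrix (Fin 2) (Fin 2) ℂ →ₗ[ℂ] Matrix (Fin 2) (Fin 2) ℂ)
    (hfix : ∀ i, G (ρ i) = ρ i) :
    ∀ (t : ℂ) (w : Fin 3 → ℂ), (nrm 0 : ℂ) * w 0 + (nrm 1 : ℂ) * w 1 + (nrm 2 : ℂ) * w 2 = 0 →
      G (t • 1 + Smat w) = t • 1 + Smat w := by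
  intro t w hw
  have hre : nrm 0 * (w 0).re + nrm 1 * (w 1).re + nrm 2 * (w 2).re = 0 := by
    have := congrArg Complex.re hw
    simpa using this
  have him : nrm 0 * (w 0).im + nrm 1 * (w 1).im + nrm 2 * (w 2).im = 0 := by
    have := congrArg Complex.im hw
    simpa using this
  have hsplit : t • (1 : Matrix (Fin 2) (Fin 2) ℂ) + Smat w
      = ((t.re : ℂ) • 1 + Smat (fun k => ((w k).re : ℂ)))
        + Complex.I • ((t.im : ℂ) • 1 + Smat (fun k => ((w k).im : ℂ))) := by
    unfold Smat
    ext i j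
    fin_cases i <;> fin_cases j <;> simp [Matrix.one_apply] <;>
      apply Complex.ext <;> simp <;> ring
  have hRe := plane_fix ρ v nrm hbloch hpure hvdist hnrm hplane G hfix t.re
    (fun k => (w k).re) hre
  have hIm := plane_fix ρ v nrm hbloch hpure hvdist hnrm hplane G hfix t.im
    (fun k => (w k).im) him
  rw [hsplit, map_add, LinearMap.map_smul, hRe, hIm]

lemma master (nrm : Fin 3 → ℝ) (s : ℝ) (hs : 0 < s)
    (hs2 : s ^ 2 = nrm 0 ^ 2 + nrm 1 ^ 2 + nrm 2 ^ 2)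
    (G : Matrix (Fin 2) (Fin 2) ℂ →ₗ[ℂ] Matrix (Fin 2) (Fin 2) ℂ)
    (hfixC : ∀ (t : ℂ) (w : Fin 3 → ℂ),
      (nrm 0 : ℂ) * w 0 + (nrm 1 : ℂ) * w 1 + (nrm 2 : ℂ) * w 2 = 0 →
      G (t • 1 + Smat w) = t • 1 + Smat w)
    (X : Matrix (Fin 2) (Fin 2) ℂ) :
    G X = X + (((X 0 1 + X 1 0) / 2) * ((nrm 0 / s : ℝ) : ℂ)
             + (Complex.I * (X 0 1 - X 1 0) / 2) * ((nrm 1 / s : ℝ) : ℂ)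
             + ((X 0 0 - X 1 1) / 2) * ((nrm 2 / s : ℝ) : ℂ))
          • (G (Smat (fun k => ((nrm k / s : ℝ) : ℂ))) - Smat (fun k => ((nrm k / s : ℝ) : ℂ))) := by
  set nhc : Fin 3 → ℂ := fun k => ((nrm k / s : ℝ) : ℂ) with hnhc
  have hsne : (s : ℂ) ≠ 0 := by
    exact_mod_cast (ne_of_gt hs)
  have key0 : ∀ k, (nrm k : ℂ) = nhc k * s := by
    intro k; rw [hnhc]; push_cast; field_simp
  have hnh1 : nhc 0 ^ 2 + nhc 1 ^ 2 + nhc 2 ^ 2 = 1 := by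
    rw [hnhc]; push_cast; field_simp
    exact_mod_cast hs2.symm
  set pc : ℂ := ((X 0 1 + X 1 0) / 2) * nhc 0 + (Complex.I * (X 0 1 - X 1 0) / 2) * nhc 1
      + ((X 0 0 - X 1 1) / 2) * nhc 2 with hpc
  set w : Fin 3 → ℂ := ![(X 0 1 + X 1 0) / 2 - pc * nhc 0,
      Complex.I * (X 0 1 - X 1 0) / 2 - pc * nhc 1,
      (X 0 0 - X 1 1) / 2 - pc * nhc 2] with hwdef
  have hcond : (nrm 0 : ℂ) * w 0 + (nrm 1 : ℂ) * w 1 + (nrm 2 : ℂ) * w 2 = 0 := by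
    rw [key0 0, key0 1, key0 2, hwdef]
    simp only [Matrix.cons_val_zero, Matrix.cons_val_one, Matrix.head_cons,
      Matrix.cons_val_two, Matrix.tail_cons]
    linear_combination (-(s : ℂ) * pc) * hnh1
  have hXdec : X - pc • Smat nhc = ((X 0 0 + X 1 1) / 2) • 1 + Smat w := by
    unfold Smat
    ext i j
    fin_cases i <;> fin_cases j
    · simp [Matrix.one_apply, hwdef]; ring
    · simp [Matrix.one_apply, hwdef]
      linear_combination ((X 0 1 - X 1 0) / 2) * Complex.I_sq
    · simp [Matrix.one_apply, hwdef]
      linear_combination ((X 1 0 - X 0 1) / 2) * Complex.I_sq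
    · simp [Matrix.one_apply, hwdef]; ring
  have h2 := hfixC ((X 0 0 + X 1 1) / 2) w hcond
  rw [← hXdec] at h2
  have h3 : G X - pc • G (Smat nhc) = X - pc • Smat nhc := by
    rw [← h2, map_sub, LinearMap.map_smul]
  have : G X = X - pc • Smat nhc + pc • G (Smat nhc) := by
    rw [← h3]; abel
  rw [this]
  rw [smul_sub]
  abel

lemma G_psd (G : Matrix (Fin 2) (Fin 2) ℂ →ₗ[ℂ] Matrix (Fin 2) (Fin 2) ℂ)
    (hCP : IsCompletelyPositive G) (ρ : Matrix (Fin 2) (Fin 2) ℂ) (hρ : ρ.PosSemidef) :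
    (G ρ).PosSemidef := by
  have hA : (Matrix.of fun (p q : Fin 2 × Fin 1) => ρ p.1 q.1).PosSemidef :=
    hρ.submatrix Prod.fst
  have hB := hCP 1 _ hA
  have hGr : G ρ = (extendMap G 1 (Matrix.of fun (p q : Fin 2 × Fin 1) => ρ p.1 q.1)).submatrix
      (fun a : Fin 2 => (a, 0)) (fun a : Fin 2 => (a, 0)) := by
    ext a b
    simp only [Matrix.submatrix_apply, extendMap, Matrix.of_apply]
    congr 1
  rw [hGr]
  exact hB.submatrix _

lemma bloch_psd (n0 n1 n2 : ℝ) (h : n0 ^ 2 + n1 ^ 2 + n2 ^ 2 = 1) :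
    ((1 / 2 : ℂ) • (1 + Smat ![(n0 : ℂ), (n1 : ℂ), (n2 : ℂ)])).PosSemidef := by
  refine Matrix.PosSemidef.of_dotProduct_mulVec_nonneg ?_ ?_
  · unfold Matrix.IsHermitian
    ext i j
    fin_cases i <;> fin_cases j <;>
      simp [Smat, Matrix.conjTranspose_apply, Matrix.one_apply, Complex.ext_iff] <;> ring
  · intro u
    have expand : star u ⬝ᵥ ((1 / 2 : ℂ) • (1 + Smat ![(n0 : ℂ), (n1 : ℂ), (n2 : ℂ)])) *ᵥ u
        = (1/2 : ℂ) * ((1 + n2) * (starRingEnd ℂ (u 0) * u 0)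
          + (1 - n2) * (starRingEnd ℂ (u 1) * u 1)
          + ((n0 : ℂ) - n1 * Complex.I) * (starRingEnd ℂ (u 0) * u 1)
          + ((n0 : ℂ) + n1 * Complex.I) * (starRingEnd ℂ (u 1) * u 0)) := by
      simp [dotProduct, Matrix.mulVec, Fin.sum_univ_two, Smat, Matrix.one_apply]
      ring
    rw [expand]
    have h2 : (1/2 : ℂ) = ((2⁻¹ : ℝ) : ℂ) := by norm_num
    rw [h2, Complex.le_def]
    constructor
    · simp only [Complex.zero_re, Complex.mul_re, Complex.mul_im, Complex.add_re, Complex.add_im,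
        Complex.sub_re, Complex.sub_im, Complex.ofReal_re, Complex.ofReal_im, Complex.I_re,
        Complex.I_im, Complex.conj_re, Complex.conj_im, Complex.one_re, Complex.one_im,
        Complex.div_re, Complex.div_im, Complex.normSq]
      ring_nf
      set a := (u 0).re; set b := (u 0).im; set c := (u 1).re; set d := (u 1).im
      nlinarith [sq_nonneg ((1+n2)*a + n0*c + n1*d), sq_nonneg ((1+n2)*b + n0*d - n1*c),
        sq_nonneg (n0*a - n1*b + (1-n2)*c), sq_nonneg (n0*b + n1*a + (1-n2)*d), h]
    · simp only [Complex.zero_im, Complex.mul_re, Complex.mul_im, Complex.add_re, Complex.add_im,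
        Complex.sub_re, Complex.sub_im, Complex.ofReal_re, Complex.ofReal_im, Complex.I_re,
        Complex.I_im, Complex.conj_re, Complex.conj_im, Complex.one_re, Complex.one_im,
        Complex.div_re, Complex.div_im, Complex.normSq]
      ring

lemma psd_small (x y z : ℝ)
    (h : ((1 / 2 : ℂ) • (1 + Smat ![(x : ℂ), (y : ℂ), (z : ℂ)])).PosSemidef) :
    x ^ 2 + y ^ 2 + z ^ 2 ≤ 1 := by
  have h1 := h.dotProduct_mulVec_nonneg ![(x : ℂ) - y * Complex.I, -(1 + z : ℂ)]
  have h2 := h.dotProduct_mulVec_nonneg ![(1 - z : ℂ), -((x : ℂ) + y * Complex.I)]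
  have e1 : star ![(x : ℂ) - y * Complex.I, -(1 + z : ℂ)] ⬝ᵥ
      ((1 / 2 : ℂ) • (1 + Smat ![(x : ℂ), (y : ℂ), (z : ℂ)])) *ᵥ ![(x : ℂ) - y * Complex.I, -(1 + z : ℂ)]
      = (((1 + z) * (1 - z^2 - x^2 - y^2) / 2 : ℝ) : ℂ) := by
    simp [dotProduct, Matrix.mulVec, Fin.sum_univ_two, Smat, Matrix.one_apply]
    apply Complex.ext <;>
      simp [Complex.add_re, Complex.add_im, Complex.mul_re, Complex.mul_im,
        ← Complex.ofReal_pow] <;> ring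
  have e2 : star ![(1 - z : ℂ), -((x : ℂ) + y * Complex.I)] ⬝ᵥ
      ((1 / 2 : ℂ) • (1 + Smat ![(x : ℂ), (y : ℂ), (z : ℂ)])) *ᵥ ![(1 - z : ℂ), -((x : ℂ) + y * Complex.I)]
      = (((1 - z) * (1 - z^2 - x^2 - y^2) / 2 : ℝ) : ℂ) := by
    simp [dotProduct, Matrix.mulVec, Fin.sum_univ_two, Smat, Matrix.one_apply]
    apply Complex.ext <;>
      simp [Complex.add_re, Complex.add_im, Complex.mul_re, Complex.mul_im,
        ← Complex.ofReal_pow] <;> ring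
  rw [e1] at h1
  rw [e2] at h2
  rw [Complex.zero_le_real] at h1 h2
  nlinarith [h1, h2]

lemma choi_ineq (G : Matrix (Fin 2) (Fin 2) ℂ →ₗ[ℂ] Matrix (Fin 2) (Fin 2) ℂ)
    (hCP : IsCompletelyPositive G) (n0 n1 n2 x y z : ℝ)
    (hn : n0 ^ 2 + n1 ^ 2 + n2 ^ 2 = 1)
    (hGX : ∀ X : Matrix (Fin 2) (Fin 2) ℂ,
      G X = X + (((X 0 1 + X 1 0) / 2) * (n0 : ℂ)
             + (Complex.I * (X 0 1 - X 1 0) / 2) * (n1 : ℂ)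
             + ((X 0 0 - X 1 1) / 2) * (n2 : ℂ))
          • Smat ![((x - n0 : ℝ) : ℂ), ((y - n1 : ℝ) : ℂ), ((z - n2 : ℝ) : ℂ)]) :
    1 ≤ x * n0 + y * n1 + z * n2 := by
  set A : Matrix (Fin 2 × Fin 2) (Fin 2 × Fin 2) ℂ :=
    Matrix.of (fun p q => (if p.1 = p.2 then (1 : ℂ) else 0) * (if q.1 = q.2 then (1 : ℂ) else 0))
    with hAdef
  have hA : A.PosSemidef := by
    have : A = (Matrix.of (fun (_ : Fin 1) (q : Fin 2 × Fin 2) =>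
        if q.1 = q.2 then (1 : ℂ) else 0))ᴴ *
        (Matrix.of (fun (_ : Fin 1) (q : Fin 2 × Fin 2) => if q.1 = q.2 then (1 : ℂ) else 0)) := by
      ext p q
      simp only [hAdef, Matrix.mul_apply, Matrix.conjTranspose_apply, Matrix.of_apply,
        Fin.sum_univ_one]
      by_cases h1 : p.1 = p.2 <;> by_cases h2 : q.1 = q.2 <;> simp [h1, h2]
    rw [this]
    exact Matrix.posSemidef_conjTranspose_mul_self _
  set ψ : Fin 2 × Fin 2 → ℂ :=
    fun p => !![(n2 : ℂ), (n0 : ℂ) - (n1 : ℂ) * Complex.I;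
                (n0 : ℂ) + (n1 : ℂ) * Complex.I, -(n2 : ℂ)] p.1 p.2 with hψ
  have hQ := (hCP 2 A hA).dotProduct_mulVec_nonneg ψ
  have key : star ψ ⬝ᵥ (extendMap G 2 A) *ᵥ ψ
      = (((n0^2+n1^2+n2^2) * ((x*n0+y*n1+z*n2) - (n0^2+n1^2+n2^2)) : ℝ) : ℂ) := by
    simp only [dotProduct, Matrix.mulVec, extendMap, Matrix.of_apply, Pi.star_apply,
      Fintype.sum_prod_type, Fin.sum_univ_two, hGX]
    norm_num [hψ, hAdef, Smat, Matrix.add_apply, Matrix.smul_apply, smul_eq_mul]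
    apply Complex.ext <;>
      simp [Complex.add_re, Complex.add_im, Complex.mul_re, Complex.mul_im,
        ← Complex.ofReal_pow] <;> ring
  rw [key, hn] at hQ
  rw [Complex.zero_le_real] at hQ
  nlinarith [hQ]

set_option maxHeartbeats 1000000 in
theorem cptp_fixing_three_pure_states_is_id
    (ρ : Fin 3 → Matrix (Fin 2) (Fin 2) ℂ) (v : Fin 3 → Fin 3 → ℝ)
    (hbloch : ∀ i, ρ i = blochMat (v i 0) (v i 1) (v i 2))
    (hpure : ∀ i, (v i 0) ^ 2 + (v i 1) ^ 2 + (v i 2) ^ 2 = 1)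
    (hdist : ∀ i j, i ≠ j → ρ i ≠ ρ j)
    (hplane : ∃ nrm : Fin 3 → ℝ, nrm ≠ 0 ∧ ∀ i, ∑ k, nrm k * v i k = 0)
    (G : Matrix (Fin 2) (Fin 2) ℂ →ₗ[ℂ] Matrix (Fin 2) (Fin 2) ℂ)
    (hCP : IsCompletelyPositive G)
    (hTP : ∀ A : Matrix (Fin 2) (Fin 2) ℂ, (G A).trace = A.trace)
    (hfix : ∀ i, G (ρ i) = ρ i) :
    ∀ A : Matrix (Fin 2) (Fin 2) ℂ, G A = A := by
  obtain ⟨nrm, hnrm0, hplane'⟩ := hplane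
  have hplane'' : ∀ i, nrm 0 * v i 0 + nrm 1 * v i 1 + nrm 2 * v i 2 = 0 := by
    intro i
    have := hplane' i
    simpa [Fin.sum_univ_three] using this
  have hvdist : ∀ i j, i ≠ j → ¬ (v i 0 = v j 0 ∧ v i 1 = v j 1 ∧ v i 2 = v j 2) := by
    intro i j hij ⟨h0, h1, h2⟩
    exact hdist i j hij (by rw [hbloch i, hbloch j, h0, h1, h2])
  have hnrmsq : 0 < nrm 0 ^ 2 + nrm 1 ^ 2 + nrm 2 ^ 2 := by
    obtain ⟨k, hk⟩ := Function.ne_iff.mp hnrm0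
    have hk2 : nrm k ≠ 0 := by simpa using hk
    have hk' : (0:ℝ) < nrm k ^ 2 :=
      lt_of_le_of_ne (sq_nonneg _) (Ne.symm (pow_ne_zero 2 hk2))
    have hk3 : k = 0 ∨ k = 1 ∨ k = 2 := by fin_cases k <;> simp
    rcases hk3 with h | h | h <;> rw [h] at hk' <;>
      nlinarith [sq_nonneg (nrm 0), sq_nonneg (nrm 1), sq_nonneg (nrm 2)]
  set s : ℝ := Real.sqrt (nrm 0 ^ 2 + nrm 1 ^ 2 + nrm 2 ^ 2) with hsdef
  have hs : 0 < s := Real.sqrt_pos.mpr hnrmsq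
  have hs2 : s ^ 2 = nrm 0 ^ 2 + nrm 1 ^ 2 + nrm 2 ^ 2 := Real.sq_sqrt (le_of_lt hnrmsq)
  clear_value s
  set n0 : ℝ := nrm 0 / s with hn0
  set n1 : ℝ := nrm 1 / s with hn1
  set n2 : ℝ := nrm 2 / s with hn2
  have hn : n0 ^ 2 + n1 ^ 2 + n2 ^ 2 = 1 := by
    rw [hn0, hn1, hn2]
    field_simp
    try linarith [hs2]
  clear_value n0 n1 n2
  have hfixC := plane_fixC ρ v nrm hbloch hpure hvdist (ne_of_gt hnrmsq) hplane'' G hfix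
  have hmaster := master nrm s hs hs2 G hfixC
  set nhf : Fin 3 → ℂ := fun k => ((nrm k / s : ℝ) : ℂ) with hnhf
  clear_value nhf
  set σ : Matrix (Fin 2) (Fin 2) ℂ := Smat nhf with hσ
  clear_value σ
  have hG1 : G 1 = 1 := by
    have h0 : Smat (fun _ => (0:ℂ)) = 0 := by
      unfold Smat; ext i j; fin_cases i <;> fin_cases j <;> simp
    have := hfixC 1 (fun _ => 0) (by simp)
    rw [h0] at this
    simpa using this
  set T : Matrix (Fin 2) (Fin 2) ℂ := G σ with hT
  clear_value T
  have hTtr : T 0 0 + T 1 1 = 0 := by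
    have := hTP σ
    rw [← hT] at this
    have hσtr : σ.trace = 0 := by
      simp [hσ, Smat, Matrix.trace, Fin.sum_univ_two]
    rw [hσtr] at this
    simpa [Matrix.trace, Fin.sum_univ_two] using this
  set ρp : Matrix (Fin 2) (Fin 2) ℂ := (1/2 : ℂ) • (1 + σ) with hρp
  clear_value ρp
  have hσvec : σ = Smat ![((n0:ℝ):ℂ), ((n1:ℝ):ℂ), ((n2:ℝ):ℂ)] := by
    have he : nhf = ![((n0:ℝ):ℂ), ((n1:ℝ):ℂ), ((n2:ℝ):ℂ)] := by
      funext k; fin_cases k <;> simp [hnhf, hn0, hn1, hn2]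
    rw [hσ, he]
  have hρpPSD : ρp.PosSemidef := by
    rw [hρp, hσvec]
    exact bloch_psd n0 n1 n2 hn
  have hGρp : G ρp = (1/2 : ℂ) • (1 + T) := by
    rw [hρp, LinearMap.map_smul, map_add, hG1, hT]
  have hPSD : ((1/2 : ℂ) • (1 + T)).PosSemidef := by
    rw [← hGρp]; exact G_psd G hCP ρp hρpPSD
  -- Hermitian structure of T
  have hherm := hPSD.1
  have h00 : (starRingEnd ℂ) (T 0 0) = T 0 0 := by
    have := congrFun (congrFun hherm 0) 0
    simp [Matrix.conjTranspose_apply, Matrix.smul_apply, Matrix.add_apply, Matrix.one_apply] at this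
    linear_combination 2 * this
  have h10 : (starRingEnd ℂ) (T 0 1) = T 1 0 := by
    have := congrFun (congrFun hherm 1) 0
    simp [Matrix.conjTranspose_apply, Matrix.smul_apply, Matrix.add_apply, Matrix.one_apply] at this
    linear_combination this
  set x : ℝ := (T 0 1).re with hx
  set y : ℝ := -((T 0 1).im) with hy
  set z : ℝ := (T 0 0).re with hz
  clear_value x y z
  have hT00 : T 0 0 = (z : ℂ) := by
    apply Complex.ext
    · simp [hz]
    · have := congrArg Complex.im h00
      simp at this
      simp [Complex.ofReal_im]
      linarith
  have hT01 : T 0 1 = (x : ℂ) - (y : ℂ) * Complex.I := by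
    apply Complex.ext <;> simp [hx, hy]
  have hT10 : T 1 0 = (x : ℂ) + (y : ℂ) * Complex.I := by
    rw [← h10, hT01]
    apply Complex.ext <;> simp
  have hT11 : T 1 1 = -((z : ℂ)) := by
    rw [← hT00]; linear_combination hTtr
  have hTmat : T = Smat ![((x:ℝ):ℂ), ((y:ℝ):ℂ), ((z:ℝ):ℂ)] := by
    ext i j
    fin_cases i <;> fin_cases j
    · simpa [Smat] using hT00
    · simp [Smat]; rw [hT01]; ring
    · simp [Smat]; rw [hT10]; ring
    · simpa [Smat] using hT11
  -- master formula in the choi_ineq shape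
  have hGX : ∀ X : Matrix (Fin 2) (Fin 2) ℂ,
      G X = X + (((X 0 1 + X 1 0) / 2) * (n0 : ℂ)
             + (Complex.I * (X 0 1 - X 1 0) / 2) * (n1 : ℂ)
             + ((X 0 0 - X 1 1) / 2) * (n2 : ℂ))
          • Smat ![((x - n0 : ℝ) : ℂ), ((y - n1 : ℝ) : ℂ), ((z - n2 : ℝ) : ℂ)] := by
    intro X
    have hD : T - σ
        = Smat ![((x - n0 : ℝ) : ℂ), ((y - n1 : ℝ) : ℂ), ((z - n2 : ℝ) : ℂ)] := by
      rw [hTmat, hσvec]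
      unfold Smat
      ext i j
      fin_cases i <;> fin_cases j <;> simp <;> push_cast <;> ring
    have hc0 : ((nrm 0 / s : ℝ) : ℂ) = ((n0 : ℝ) : ℂ) := by rw [hn0]
    have hc1 : ((nrm 1 / s : ℝ) : ℂ) = ((n1 : ℝ) : ℂ) := by rw [hn1]
    have hc2 : ((nrm 2 / s : ℝ) : ℂ) = ((n2 : ℝ) : ℂ) := by rw [hn2]
    have := hmaster X
    rw [hD, hc0, hc1, hc2] at this
    exact this
  have hball := psd_small x y z (by rw [← hTmat]; exact hPSD)
  have hcirc := choi_ineq G hCP n0 n1 n2 x y z hn hGX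
  have hxe : x = n0 := by nlinarith [sq_nonneg (x - n0), sq_nonneg (y - n1), sq_nonneg (z - n2)]
  have hye : y = n1 := by nlinarith [sq_nonneg (x - n0), sq_nonneg (y - n1), sq_nonneg (z - n2)]
  have hze : z = n2 := by nlinarith [sq_nonneg (x - n0), sq_nonneg (y - n1), sq_nonneg (z - n2)]
  intro A
  have hzero : Smat ![((x - n0 : ℝ) : ℂ), ((y - n1 : ℝ) : ℂ), ((z - n2 : ℝ) : ℂ)] = 0 := by
    rw [hxe, hye, hze]
    unfold Smat
    ext i j
    fin_cases i <;> fin_cases j <;> simp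
  rw [hGX A, hzero, smul_zero, add_zero]
end
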